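/- Let K be a finite field of cardinality q and characteristic p. If p = 2, then there exists y ∈ K such that the y-monomial minimal solution over K is irreducible and has size q + 1. If p ≠ 2, then there exists y ∈ K such that the y-monomial minimal solution over K is irreducible and has size (q + 1)/2. In particular the maximal size of irreducible λ-quiddities over K is at least q + 1 when p = 2 and at least (q+1)/2 when p ≠ 2. -/

import Mathlib

namespace Quiddity

variable {A : Type*} [CommRing A]

/-- `mMat [a₁, …, aₙ]` is the matrix product `[[aₙ,-1],[1,0]] ⋯ [[a₁,-1],[1,0]]`. -/
def mMat : List A → Matrix (Fin 2) (Fin 2) A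
  | [] => 1
  | a :: t => mMat t * !![a, -1; 1, 0]

/-- Continuant: `cont [] = K₀ = 1`, `cont [a] = K₁(a) = a`, and the continuant recursion. -/
def cont : List A → A
  | [] => 1
  | [a] => a
  | a :: b :: t => a * cont (b :: t) - cont t

/-- A λ-quiddity is a tuple with `Mₙ(a₁,…,aₙ) = ± Id`. -/
def IsQuiddity (l : List A) : Prop := mMat l = 1 ∨ mMat l = -1

/-- The sum `⊕` of two tuples (meaningful for tuples of length ≥ 2):
`(a₁,…,aₘ) ⊕ (b₁,…,b_l) = (a₁+b_l, a₂,…,a_{m−1}, aₘ+b₁, b₂,…,b_{l−1})`. -/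
def oplus (la lb : List A) : List A :=
  (la.headD 0 + lb.getLastD 0) ::
    (la.tail.dropLast ++ (la.getLastD 0 + lb.headD 0) :: lb.tail.dropLast)

/-- Two tuples are equivalent if one is a cyclic permutation of the other or of its
reversal. -/
def TupleEquiv (l l' : List A) : Prop :=
  List.IsRotated l l' ∨ List.IsRotated l.reverse l'

/-- A λ-quiddity `c` is reducible if `c ∼ a ⊕ b` with `b` a λ-quiddity and both of size ≥ 3. -/
def QuiddityReducible (c : List A) : Prop :=
  ∃ a b : List A, 3 ≤ a.length ∧ 3 ≤ b.length ∧ IsQuiddity b ∧ TupleEquiv c (oplus a b)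

/-- `(a, b, a, b, …, a, b)` with `k` repetitions of the pair `(a, b)` (size `2k`). -/
def dynList : ℕ → A → A → List A
  | 0, _, _ => []
  | k + 1, a, b => a :: b :: dynList k a b

/-- `(u, v, v, u, v, v, …, u, v, v)` with `k` repetitions of the block `(u, v, v)`
(size `3k`). -/
def triList : ℕ → A → A → List A
  | 0, _, _ => []
  | k + 1, a, b => a :: b :: b :: triList k a b

end Quiddity

open Quiddity
section Generic
variable {A : Type*} [CommRing A] {B : Type*} [CommRing B]
def cseq (y : A) : ℕ → A
  | 0 => 0
  | 1 => 1
  | (k+2) => y * cseq y (k+1) - cseq y k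
@[simp] lemma cseq_zero (y : A) : cseq y 0 = 0 := rfl
@[simp] lemma cseq_one (y : A) : cseq y 1 = 1 := rfl
lemma cseq_add_two (y : A) (k : ℕ) : cseq y (k+2) = y * cseq y (k+1) - cseq y k := rfl
lemma cseq_map (f : A →+* B) (y : A) (k : ℕ) : f (cseq y k) = cseq (f y) k := by
  induction k using Nat.strong_induction_on with
  | _ k ih =>
    match k with
    | 0 => simp
    | 1 => simp
    | (k+2) =>
      rw [cseq_add_two, cseq_add_two, map_sub, map_mul, ih (k+1) (by omega), ih k (by omega)]

lemma mMat_append (u v : List A) : mMat (u ++ v) = mMat v * mMat u := by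
  induction u with
  | nil => simp [mMat]
  | cons a t ih => simp [mMat, ih, mul_assoc]
lemma mMat_replicate (y : A) (k : ℕ) :
    mMat (List.replicate k y) = (!![y, -1; 1, 0]) ^ k := by
  induction k with
  | zero => rfl
  | succ k ih => rw [List.replicate_succ, mMat, ih, pow_succ]
lemma R_pow (y : A) (k : ℕ) :
    (!![y, -1; 1, 0]) ^ (k+1) = !![cseq y (k+2), -cseq y (k+1); cseq y (k+1), -cseq y k] := by
  induction k with
  | zero => simp [cseq_add_two]
  | succ k ih =>
    rw [pow_succ, ih]
    ext i j
    fin_cases i <;> fin_cases j <;>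
      simp [Matrix.mul_apply, Fin.sum_univ_two, cseq_add_two] <;> ring
end Generic

section FieldLemmas
variable {F : Type*} [Field F]

lemma quiddity_replicate_iff (y : F) (k : ℕ) :
    IsQuiddity (List.replicate (k+1) y) ↔ cseq y (k+1) = 0 := by
  rw [IsQuiddity, mMat_replicate, R_pow]
  constructor
  · rintro (h | h)
    · have := congrArg (fun M => M 1 0) h
      simpa [Matrix.one_fin_two] using this
    · have := congrArg (fun M => M 1 0) h
      simpa [Matrix.one_fin_two] using this
  · intro h0
    have hdet : (!![y, -1; 1, 0] : Matrix (Fin 2) (Fin 2) F).det = 1 := by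
      simp [Matrix.det_fin_two_of]
    have hdetpow := Matrix.det_pow (!![y, -1; 1, 0] : Matrix (Fin 2) (Fin 2) F) (k+1)
    rw [R_pow, hdet, one_pow, Matrix.det_fin_two_of, h0] at hdetpow
    have h2 : cseq y (k+2) = -cseq y k := by rw [cseq_add_two, h0]; ring
    rw [h2] at hdetpow
    have : cseq y k * cseq y k = 1 := by linear_combination hdetpow
    rcases mul_self_eq_one_iff.mp this with h | h
    · right
      rw [h0, h2, h]
      ext i j; fin_cases i <;> fin_cases j <;> simp [Matrix.one_fin_two]
    · left
      rw [h0, h2, h]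
      ext i j; fin_cases i <;> fin_cases j <;> simp [Matrix.one_fin_two]


lemma not_reducible (y : F) (n : ℕ)
    (H : ∀ k, 2 ≤ k → k + 2 ≤ n → cseq y k ≠ 1 ∧ cseq y k ≠ -1) :
    ¬ QuiddityReducible (List.replicate n y) := by
  rintro ⟨a, b, ha, hb, hqb, hequiv⟩
  have hperm : (oplus a b).Perm (List.replicate n y) := by
    rcases hequiv with h | h
    · exact h.perm.symm
    · rw [List.reverse_replicate] at h; exact h.perm.symm
  have heq : oplus a b = List.replicate n y :=
    List.eq_replicate_iff.mpr ⟨by rw [hperm.length_eq, List.length_replicate],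
      fun x hx => List.eq_of_mem_replicate (hperm.subset hx)⟩
  have hlen : (oplus a b).length = a.length + b.length - 2 := by
    simp only [oplus, List.length_cons, List.length_append, List.length_dropLast,
      List.length_tail]
    omega
  have hn : a.length + b.length - 2 = n := by
    rw [heq, List.length_replicate] at hlen; omega
  obtain ⟨j, hj⟩ : ∃ j, b.length = j + 3 := ⟨b.length - 3, by omega⟩
  have hbne : b ≠ [] := by intro h; rw [h] at hj; simp at hj
  have htne : b.tail ≠ [] := by
    have : b.tail.length = j + 2 := by rw [List.length_tail, hj]; omega
    intro h; rw [h] at this; simp at this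
  have hb1 : b = b.head hbne :: (b.tail.dropLast ++ [b.tail.getLast htne]) := by
    rw [List.dropLast_append_getLast htne, List.cons_head_tail]
  have hmidlen : b.tail.dropLast.length = j + 1 := by
    rw [List.length_dropLast, List.length_tail, hj]; omega
  have hmid : b.tail.dropLast = List.replicate (j+1) y := by
    refine List.eq_replicate_iff.mpr ⟨hmidlen, fun x hx => ?_⟩
    have hxo : x ∈ oplus a b := by
      simp only [oplus, List.mem_cons, List.mem_append]
      right; right
      exact Or.inr hx
    rw [heq] at hxo
    exact List.eq_of_mem_replicate hxo
  have hval : mMat b 1 1 = -(cseq y (j+2)) := by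
    conv_lhs => rw [hb1]
    rw [mMat, mMat_append, hmid, mMat_replicate, R_pow]
    simp [mMat, Matrix.mul_apply, Fin.sum_univ_two]
  have hk2 : (2:ℕ) ≤ j + 2 := by omega
  have hk2n : j + 2 + 2 ≤ n := by omega
  rcases hqb with h | h
  · have h11 := congrArg (fun M => M 1 1) h
    simp only [hval] at h11
    have : cseq y (j+2) = -1 := by
      have h12 : -cseq y (j+2) = 1 := by simpa [Matrix.one_fin_two] using h11
      linear_combination -h12
    exact (H (j+2) hk2 hk2n).2 this
  · have h11 := congrArg (fun M => M 1 1) h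
    simp only [hval] at h11
    have : cseq y (j+2) = 1 := by
      have h12 : -cseq y (j+2) = -1 := by simpa [Matrix.one_fin_two] using h11
      linear_combination -h12
    exact (H (j+2) hk2 hk2n).1 this

end FieldLemmas

/-- over a finite field `K` of cardinality `q`, there is a `y` whose
`y`-monomial minimal solution is irreducible of size `q + 1` (char 2), resp. `(q+1)/2`
(char ≠ 2); in particular the maximal size of irreducible λ-quiddities is at least that
much. -/
theorem stmt7 (K : Type*) [Field K] [Fintype K] :
    (ringChar K = 2 →
      (∃ (y : K) (n : ℕ), 0 < n ∧ IsQuiddity (List.replicate n y) ∧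
          (∀ k, 0 < k → IsQuiddity (List.replicate k y) → n ≤ k) ∧
          n = Fintype.card K + 1 ∧
          ¬ QuiddityReducible (List.replicate n y)) ∧
      (∃ l : List K, IsQuiddity l ∧ ¬ QuiddityReducible l ∧
          Fintype.card K + 1 ≤ l.length)) ∧
    (ringChar K ≠ 2 →
      (∃ (y : K) (n : ℕ), 0 < n ∧ IsQuiddity (List.replicate n y) ∧
          (∀ k, 0 < k → IsQuiddity (List.replicate k y) → n ≤ k) ∧
          n = (Fintype.card K + 1) / 2 ∧
          ¬ QuiddityReducible (List.replicate n y)) ∧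
      (∃ l : List K, IsQuiddity l ∧ ¬ QuiddityReducible l ∧
          (Fintype.card K + 1) / 2 ≤ l.length)) := by
  classical
  set q := Fintype.card K with hq
  have hq1 : 1 < q := Fintype.one_lt_card
  haveI : CharP K (ringChar K) := ringChar.charP K
  obtain ⟨e, hp, hcard⟩ := FiniteField.card K (ringChar K)
  haveI hfp : Fact (Nat.Prime (ringChar K)) := ⟨hp⟩
  set N : ℕ+ := ⟨q + 1, by omega⟩ with hN
  have hNval : (N : ℕ) = q + 1 := rfl
  have hNK : ((N : ℕ) : K) ≠ 0 := by
    have h2 : ((N : ℕ) : K) = 1 := by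
      rw [hNval]
      push_cast
      rw [hq, FiniteField.cast_card_eq_zero, zero_add]
    rw [h2]; exact one_ne_zero
  haveI : NeZero ((N : ℕ) : K) := ⟨hNK⟩
  set L := CyclotomicField N K with hL
  obtain ⟨ζ, hζ⟩ := IsCyclotomicExtension.exists_isPrimitiveRoot K L (Set.mem_singleton (N : ℕ)) N.ne_zero
  have hζ' : IsPrimitiveRoot ζ (q + 1) := hζ
  have hζ0 : ζ ≠ 0 := hζ'.ne_zero (by omega)
  set ι := algebraMap K L with hι
  have hιinj : Function.Injective ι := (algebraMap K L).injective
  haveI hchL : CharP L (ringChar K) := charP_of_injective_algebraMap hιinj (ringChar K)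
  set z := ζ + ζ⁻¹ with hz
  have hone : ζ * ζ⁻¹ = 1 := mul_inv_cancel₀ hζ0
  have hζq : ζ ^ q = ζ⁻¹ := by
    have h1 : ζ ^ (q + 1) = 1 := hζ'.pow_eq_one
    have h2 : ζ ^ q * ζ = 1 := by rw [← pow_succ]; exact h1
    exact eq_inv_of_mul_eq_one_left h2
  have hzq : z ^ q = z := by
    have hqe : q = ringChar K ^ (e : ℕ) := hcard
    rw [hz, hqe, add_pow_char_pow, ← hqe, hζq, inv_pow, hζq, inv_inv, add_comm]
  obtain ⟨y, hy⟩ : ∃ y : K, ι y = z := by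
    set f : Polynomial L := Polynomial.X ^ q - Polynomial.X with hf
    have hfdeg : f.natDegree = q := FiniteField.X_pow_card_sub_X_natDegree_eq L hq1
    have hf0 : f ≠ 0 := by
      intro h; rw [h] at hfdeg; simp at hfdeg; omega
    have hTsub : (Finset.univ.image ι) ⊆ f.roots.toFinset := by
      intro t ht
      simp only [Finset.mem_image] at ht
      obtain ⟨x, -, rfl⟩ := ht
      rw [Multiset.mem_toFinset, Polynomial.mem_roots hf0]
      simp only [Polynomial.IsRoot, hf, Polynomial.eval_sub, Polynomial.eval_pow,
        Polynomial.eval_X]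
      rw [← map_pow, FiniteField.pow_card, sub_self]
    have hcardT : (Finset.univ.image ι).card = q := by
      rw [Finset.card_image_of_injective _ hιinj, Finset.card_univ]
    have hroots : f.roots.toFinset.card ≤ q :=
      le_trans (Multiset.toFinset_card_le _) (by simpa [hfdeg] using Polynomial.card_roots' f)
    have hTeq : f.roots.toFinset = Finset.univ.image ι :=
      (Finset.eq_of_subset_of_card_le hTsub (by rw [hcardT]; exact hroots)).symm
    have hzz : z ∈ f.roots.toFinset := by
      rw [Multiset.mem_toFinset, Polynomial.mem_roots hf0]
      simp only [Polynomial.IsRoot, hf, Polynomial.eval_sub, Polynomial.eval_pow,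
        Polynomial.eval_X]
      rw [hzq, sub_self]
    rw [hTeq] at hzz
    simp only [Finset.mem_image] at hzz
    obtain ⟨y, -, hy⟩ := hzz
    exact ⟨y, hy⟩
  have hδ : ζ - ζ⁻¹ ≠ 0 := by
    rw [sub_ne_zero]
    intro hcontra
    have h2 : ζ ^ 2 = 1 := by rw [sq]; nth_rewrite 2 [hcontra]; exact hone
    have h3 := (hζ'.pow_eq_one_iff_dvd 2).mp h2
    have := Nat.le_of_dvd (by norm_num) h3
    omega
  -- the key continuant identity
  have hkey : ∀ k, (ζ - ζ⁻¹) * cseq z k = ζ ^ k - (ζ⁻¹) ^ k := by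
    intro k
    induction k using Nat.strong_induction_on with
    | _ k ih =>
      match k with
      | 0 => simp
      | 1 => simp
      | (k+2) =>
        have i1 := ih (k+1) (by omega)
        have i0 := ih k (by omega)
        rw [cseq_add_two, hz]
        linear_combination (ζ + ζ⁻¹) * i1 - i0 + (ζ ^ k - (ζ⁻¹) ^ k) * hone
  have hmap : ∀ k, ι (cseq y k) = cseq z k := fun k => by rw [cseq_map ι y k, hy]
  have hzero : ∀ k, cseq y k = 0 ↔ (q + 1) ∣ 2 * k := by
    intro k
    rw [← hζ'.pow_eq_one_iff_dvd]
    constructor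
    · intro h
      have h1 := hkey k
      rw [← hmap k, h, map_zero, mul_zero] at h1
      have h2 : ζ ^ k = (ζ⁻¹) ^ k := by
        have := h1.symm
        rw [sub_eq_zero] at this
        exact this
      calc ζ ^ (2 * k) = ζ ^ k * ζ ^ k := by rw [two_mul, pow_add]
        _ = ζ ^ k * (ζ⁻¹) ^ k := by rw [← h2]
        _ = 1 := by rw [← mul_pow, hone, one_pow]
    · intro h
      have h2 : ζ ^ k = (ζ⁻¹) ^ k := by
        rw [inv_pow]
        apply eq_inv_of_mul_eq_one_left
        rw [← pow_add]
        rw [two_mul] at h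
        exact h
      have h1 := hkey k
      rw [← h2, sub_self] at h1
      have h3 := (mul_eq_zero.mp h1).resolve_left hδ
      rw [← hmap k] at h3
      exact hιinj (by rw [h3, map_zero])
  have hpm : ∀ k, (cseq y k = 1 ∨ cseq y k = -1) →
      ζ ^ k = ζ ∨ ζ ^ k = ζ⁻¹ ∨ ζ ^ k = -ζ ∨ ζ ^ k = -ζ⁻¹ := by
    intro k hk
    have hone_k : ζ ^ k * (ζ⁻¹) ^ k = 1 := by rw [← mul_pow, hone, one_pow]
    rcases hk with h | h
    · have h1 := hkey k
      rw [← hmap k, h, map_one, mul_one] at h1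
      have h2 : (ζ ^ k - ζ) * (ζ ^ k + ζ⁻¹) = 0 := by
        linear_combination (-(ζ ^ k)) * h1 + hone_k - hone
      rcases mul_eq_zero.mp h2 with h3 | h3
      · exact Or.inl (sub_eq_zero.mp h3)
      · exact Or.inr (Or.inr (Or.inr (eq_neg_of_add_eq_zero_left h3)))
    · have h1 := hkey k
      rw [← hmap k, h, map_neg, map_one, mul_neg_one] at h1
      have h2 : (ζ ^ k - ζ⁻¹) * (ζ ^ k + ζ) = 0 := by
        linear_combination (-(ζ ^ k)) * h1 + hone_k - hone
      rcases mul_eq_zero.mp h2 with h3 | h3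
      · exact Or.inr (Or.inl (sub_eq_zero.mp h3))
      · exact Or.inr (Or.inr (Or.inl (eq_neg_of_add_eq_zero_left h3)))
  -- quiddity criterion transported to K
  have hquid : ∀ k, 0 < k → (IsQuiddity (List.replicate k y) ↔ (q + 1) ∣ 2 * k) := by
    intro k hk
    obtain ⟨m, rfl⟩ : ∃ m, k = m + 1 := ⟨k - 1, by omega⟩
    rw [quiddity_replicate_iff, hzero]
  constructor
  · -- characteristic 2
    intro hchar2
    have hqeven : 2 ∣ q := by
      rw [hq, hcard, ← hchar2]
      exact dvd_pow_self _ (by positivity)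
    have hodd : ¬ (2 ∣ (q+1)) := by omega
    haveI hchL2 : CharP L 2 := by rw [← hchar2]; exact hchL
    have hnegL : ∀ x : L, -x = x := by
      intro x
      haveI : Fact (2 = 2) := ⟨rfl⟩
      exact CharTwo.neg_eq x
    have hH : ∀ k, 2 ≤ k → k + 2 ≤ q + 1 → cseq y k ≠ 1 ∧ cseq y k ≠ -1 := by
      intro k hk2 hkn
      have main : ¬ (cseq y k = 1 ∨ cseq y k = -1) := by
        intro h
        rcases hpm k h with h3 | h3 | h3 | h3
        · have h4 : ζ ^ (k - 1) * ζ = 1 * ζ := by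
            rw [one_mul, ← pow_succ]
            have : k - 1 + 1 = k := by omega
            rw [this, h3]
          have h5 := mul_right_cancel₀ hζ0 h4
          have h6 := (hζ'.pow_eq_one_iff_dvd (k-1)).mp h5
          have := Nat.le_of_dvd (by omega) h6
          omega
        · have h4 : ζ ^ (k + 1) = 1 := by
            rw [pow_succ, h3]
            exact inv_mul_cancel₀ hζ0
          have h6 := (hζ'.pow_eq_one_iff_dvd (k+1)).mp h4
          have := Nat.le_of_dvd (by omega) h6
          omega
        · rw [hnegL] at h3
          have h4 : ζ ^ (k - 1) * ζ = 1 * ζ := by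
            rw [one_mul, ← pow_succ]
            have : k - 1 + 1 = k := by omega
            rw [this, h3]
          have h5 := mul_right_cancel₀ hζ0 h4
          have h6 := (hζ'.pow_eq_one_iff_dvd (k-1)).mp h5
          have := Nat.le_of_dvd (by omega) h6
          omega
        · rw [hnegL] at h3
          have h4 : ζ ^ (k + 1) = 1 := by
            rw [pow_succ, h3]
            exact inv_mul_cancel₀ hζ0
          have h6 := (hζ'.pow_eq_one_iff_dvd (k+1)).mp h4
          have := Nat.le_of_dvd (by omega) h6
          omega
      exact ⟨fun h => main (Or.inl h), fun h => main (Or.inr h)⟩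
    have hirr := not_reducible y (q+1) hH
    refine ⟨⟨y, q + 1, by omega, ?_, ?_, by rw [hq], hirr⟩, ⟨List.replicate (q+1) y, ?_, hirr, ?_⟩⟩
    · rw [hquid (q+1) (by omega)]
      exact ⟨2, by ring⟩
    · intro k hk hkq
      rw [hquid k hk] at hkq
      obtain ⟨c, hc⟩ := hkq
      have h2c : (2:ℕ) ∣ c := by
        rcases (Nat.prime_two.dvd_mul).mp (⟨k, by omega⟩ : (2:ℕ) ∣ (q+1) * c) with h | h
        · exact absurd h hodd
        · exact h
      obtain ⟨c', rfl⟩ := h2c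
      have hkc : k = (q+1) * c' := by
        have h8 : 2 * k = 2 * ((q+1) * c') := by rw [hc]; ring
        exact Nat.eq_of_mul_eq_mul_left (by norm_num) h8
      have h7 : (q+1) ∣ k := ⟨c', hkc⟩
      exact Nat.le_of_dvd hk h7
    · rw [hquid (q+1) (by omega)]
      exact ⟨2, by ring⟩
    · rw [List.length_replicate, hq]
  · -- odd characteristic
    intro hchar2
    have hqodd : ¬ (2 ∣ q) := by
      rw [hq, hcard]
      intro hdvd
      have h2 : (2 : ℕ) ∣ ringChar K := (Nat.Prime.dvd_of_dvd_pow Nat.prime_two hdvd)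
      have := (Nat.prime_dvd_prime_iff_eq Nat.prime_two hp).mp h2
      exact hchar2 this.symm
    obtain ⟨n, hn2⟩ : ∃ n, q + 1 = 2 * n := ⟨(q+1)/2, by omega⟩
    have hn1 : 2 ≤ n := by omega
    have hζn : ζ ^ n = -1 := by
      have h2 : ζ ^ n * ζ ^ n = 1 := by
        rw [← pow_add, ← two_mul, ← hn2]
        exact hζ'.pow_eq_one
      rcases mul_self_eq_one_iff.mp h2 with h3 | h3
      · exfalso
        have h6 := (hζ'.pow_eq_one_iff_dvd n).mp h3
        have := Nat.le_of_dvd (by omega) h6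
        omega
      · exact h3
    have hH : ∀ k, 2 ≤ k → k + 2 ≤ n → cseq y k ≠ 1 ∧ cseq y k ≠ -1 := by
      intro k hk2 hkn
      have main : ¬ (cseq y k = 1 ∨ cseq y k = -1) := by
        intro h
        rcases hpm k h with h3 | h3 | h3 | h3
        · have h4 : ζ ^ (k - 1) * ζ = 1 * ζ := by
            rw [one_mul, ← pow_succ]
            have : k - 1 + 1 = k := by omega
            rw [this, h3]
          have h5 := mul_right_cancel₀ hζ0 h4
          have h6 := (hζ'.pow_eq_one_iff_dvd (k-1)).mp h5
          have := Nat.le_of_dvd (by omega) h6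
          omega
        · have h4 : ζ ^ (k + 1) = 1 := by
            rw [pow_succ, h3]
            exact inv_mul_cancel₀ hζ0
          have h6 := (hζ'.pow_eq_one_iff_dvd (k+1)).mp h4
          have := Nat.le_of_dvd (by omega) h6
          omega
        · -- ζ^k = -ζ = ζ^(n+1)
          have h4 : ζ ^ (n + 1 - k) * ζ ^ k = 1 * ζ ^ k := by
            rw [one_mul, ← pow_add]
            have heq2 : n + 1 - k + k = n + 1 := by omega
            rw [heq2, pow_succ, hζn, h3]
            ring
          have h5 := mul_right_cancel₀ (pow_ne_zero k hζ0) h4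
          have h6 := (hζ'.pow_eq_one_iff_dvd (n+1-k)).mp h5
          have := Nat.le_of_dvd (by omega) h6
          omega
        · -- ζ^k = -ζ⁻¹ so ζ^(k+1) = -1 = ζ^n
          have h4 : ζ ^ (n - (k + 1)) * ζ ^ (k + 1) = 1 * ζ ^ (k + 1) := by
            rw [one_mul, ← pow_add]
            have heq2 : n - (k + 1) + (k + 1) = n := by omega
            rw [heq2, hζn, pow_succ, h3]
            rw [neg_mul, inv_mul_cancel₀ hζ0]
          have h5 := mul_right_cancel₀ (pow_ne_zero (k+1) hζ0) h4
          have h6 := (hζ'.pow_eq_one_iff_dvd (n-(k+1))).mp h5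
          have := Nat.le_of_dvd (by omega) h6
          omega
      exact ⟨fun h => main (Or.inl h), fun h => main (Or.inr h)⟩
    have hirr := not_reducible y n hH
    refine ⟨⟨y, n, by omega, ?_, ?_, by omega, hirr⟩, ⟨List.replicate n y, ?_, hirr, ?_⟩⟩
    · rw [hquid n (by omega)]
      exact ⟨1, by omega⟩
    · intro k hk hkq
      rw [hquid k hk] at hkq
      rw [hn2] at hkq
      have h7 : n ∣ k := (mul_dvd_mul_iff_left (by norm_num : (2:ℕ) ≠ 0)).mp hkq
      exact Nat.le_of_dvd hk h7
    · rw [hquid n (by omega)]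
      exact ⟨1, by omega⟩
    · rw [List.length_replicate]; omega
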